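/- arXiv:2406.17133 — 3 statements merged into one kernel-verified Lean document; each statement's English description precedes it below -/
import Mathlib

section
/- For a density matrix Q on a d-dimensional Hilbert space, r ∈ (0,1) ∪ (1,∞), and s ≠ 0, the Hu–Ye unified entropy HY_r^s(Q) = (1/((1−r)s))·((Tr Q^r)^s − 1) satisfies 0 ≤ HY_r^s(Q) ≤ (1/((1−r)s))·(d^{(1−r)s} − 1). -/
open scoped ComplexOrder Matrix

/-- The Hu–Ye unified entropy of a Hermitian matrix, computed from its eigenvalues. -/
noncomputable def HY {d : ℕ} {Q : Matrix (Fin d) (Fin d) ℂ}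
    (hQ : Q.IsHermitian) (r s : ℝ) : ℝ :=
  (1 / ((1 - r) * s)) * ((∑ i, hQ.eigenvalues i ^ r) ^ s - 1)

lemma hy_aux1 (T u t : ℝ) (hT : 0 < T) (hut : 0 ≤ u * (T - 1)) (hu : u ≠ 0) (ht : t ≠ 0) :
    0 ≤ 1 / (u * t) * (T ^ t - 1) := by
  rcases hu.lt_or_gt with hu | hu <;> rcases ht.lt_or_gt with ht | ht
  · have hT1 : T ≤ 1 := by nlinarith
    have h1 : 1 ≤ T ^ t := Real.one_le_rpow_of_pos_of_le_one_of_nonpos hT hT1 ht.le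
    have h2 : 0 < u * t := mul_pos_of_neg_of_neg hu ht
    have h3 : 0 < 1 / (u * t) := by positivity
    nlinarith
  · have hT1 : T ≤ 1 := by nlinarith
    have h1 : T ^ t ≤ 1 := Real.rpow_le_one hT.le hT1 ht.le
    have h2 : u * t < 0 := mul_neg_of_neg_of_pos hu ht
    have h3 : 1 / (u * t) < 0 := div_neg_of_pos_of_neg one_pos h2
    nlinarith
  · have hT1 : 1 ≤ T := by nlinarith
    have h1 : T ^ t ≤ 1 := Real.rpow_le_one_of_one_le_of_nonpos hT1 ht.le
    have h2 : u * t < 0 := mul_neg_of_pos_of_neg hu ht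
    have h3 : 1 / (u * t) < 0 := div_neg_of_pos_of_neg one_pos h2
    nlinarith
  · have hT1 : 1 ≤ T := by nlinarith
    have h1 : 1 ≤ T ^ t := Real.one_le_rpow hT1 ht.le
    have h2 : 0 < u * t := mul_pos hu ht
    have h3 : 0 < 1 / (u * t) := by positivity
    nlinarith

lemma hy_aux2 (T D u t : ℝ) (hT : 0 < T) (hD : 0 < D) (h : 0 ≤ u * (D - T))
    (hu : u ≠ 0) (ht : t ≠ 0) :
    1 / (u * t) * (T ^ t - 1) ≤ 1 / (u * t) * (D ^ t - 1) := by
  rcases hu.lt_or_gt with hu | hu <;> rcases ht.lt_or_gt with ht | ht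
  · -- u < 0 : D ≤ T; t < 0 : T^t ≤ D^t; u*t > 0
    have hDT : D ≤ T := by nlinarith
    have h1 : T ^ t ≤ D ^ t := Real.rpow_le_rpow_of_nonpos hD hDT ht.le
    have h2 : 0 < u * t := mul_pos_of_neg_of_neg hu ht
    have h3 : 0 < 1 / (u * t) := by positivity
    nlinarith
  · -- u < 0 : D ≤ T; t > 0 : D^t ≤ T^t; u*t < 0
    have hDT : D ≤ T := by nlinarith
    have h1 : D ^ t ≤ T ^ t := Real.rpow_le_rpow hD.le hDT ht.le
    have h2 : u * t < 0 := mul_neg_of_neg_of_pos hu ht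
    have h3 : 1 / (u * t) < 0 := by
      exact div_neg_of_pos_of_neg one_pos h2
    nlinarith
  · -- u > 0 : T ≤ D; t < 0 : D^t ≤ T^t; u*t < 0
    have hDT : T ≤ D := by nlinarith
    have h1 : D ^ t ≤ T ^ t := Real.rpow_le_rpow_of_nonpos hT hDT ht.le
    have h2 : u * t < 0 := mul_neg_of_pos_of_neg hu ht
    have h3 : 1 / (u * t) < 0 := div_neg_of_pos_of_neg one_pos h2
    nlinarith
  · -- u > 0 : T ≤ D; t > 0 : T^t ≤ D^t; u*t > 0
    have hDT : T ≤ D := by nlinarith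
    have h1 : T ^ t ≤ D ^ t := Real.rpow_le_rpow hT.le hDT ht.le
    have h2 : 0 < u * t := mul_pos hu ht
    have h3 : 0 < 1 / (u * t) := by positivity
    nlinarith

theorem HY_nonneg_and_bounded {d : ℕ} {Q : Matrix (Fin d) (Fin d) ℂ}
    (hQ : Q.PosSemidef) (hTr : Q.trace = 1)
    (r s : ℝ) (hr : r ∈ Set.Ioo (0:ℝ) 1 ∪ Set.Ioi 1) (hs : s ≠ 0) :
    0 ≤ HY hQ.1 r s ∧ HY hQ.1 r s ≤ (1 / ((1 - r) * s)) * ((d : ℝ) ^ ((1 - r) * s) - 1) := by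
  set p : Fin d → ℝ := hQ.1.eigenvalues with hp
  have hpnn : ∀ i, 0 ≤ p i := fun i => hQ.eigenvalues_nonneg i
  -- sum of eigenvalues = 1
  have hsum : ∑ i, p i = 1 := by
    have h1 : Q.trace = ∑ i, (p i : ℂ) := by
      exact hQ.1.trace_eq_sum_eigenvalues
    rw [hTr] at h1
    have := congrArg Complex.re h1.symm
    simpa using this
  have hd : 0 < d := by
    rcases Nat.eq_zero_or_pos d with h | h
    · subst h; simp at hsum
    · exact h
  have hdR : (0:ℝ) < d := Nat.cast_pos.mpr hd
  have hpi1 : ∀ i, p i ≤ 1 := by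
    intro i
    calc p i ≤ ∑ j, p j := Finset.single_le_sum (fun j _ => hpnn j) (Finset.mem_univ i)
    _ = 1 := hsum
  have hr0 : 0 < r := by rcases hr with h | h; exacts [h.1, lt_trans one_pos h]
  have hr1 : r ≠ 1 := by rcases hr with h | h; exacts [ne_of_lt h.2, ne_of_gt h]
  set T : ℝ := ∑ i, p i ^ r with hT
  set u : ℝ := 1 - r with hu
  have hune : u ≠ 0 := sub_ne_zero.mpr (Ne.symm hr1)
  -- Jensen with weights 1/d, exponent max(r, 1/r) ≥ 1
  have hwsum : ∑ _i : Fin d, (1 / (d:ℝ)) = 1 := by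
    simp [Finset.sum_const, Finset.card_univ]
    field_simp
  -- claim1 : 0 ≤ u * (T - 1)
  have claim1 : 0 ≤ u * (T - 1) := by
    rcases hr with h | h
    · -- 0 < r < 1 : u > 0 and T ≥ 1 since p i ^ r ≥ p i
      have hu0 : 0 < u := by
        have h' := h.2
        simp only [hu]; linarith
      have hT1 : 1 ≤ T := by
        rw [← hsum]
        apply Finset.sum_le_sum
        intro i _
        rcases eq_or_lt_of_le (hpnn i) with h0 | h0
        · rw [← h0]; rw [Real.zero_rpow (ne_of_gt h.1)]
        · calc p i = p i ^ (1:ℝ) := (Real.rpow_one _).symm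
          _ ≤ p i ^ r := Real.rpow_le_rpow_of_exponent_ge h0 (hpi1 i) h.2.le
      nlinarith
    · -- r > 1 : u < 0 and T ≤ 1
      have hu0 : u < 0 := by
        have h' := Set.mem_Ioi.mp h
        simp only [hu]; linarith
      have hT1 : T ≤ 1 := by
        rw [← hsum]
        apply Finset.sum_le_sum
        intro i _
        rcases eq_or_lt_of_le (hpnn i) with h0 | h0
        · rw [← h0]; rw [Real.zero_rpow (by positivity : r ≠ 0)]
        · calc p i ^ r ≤ p i ^ (1:ℝ) :=
              Real.rpow_le_rpow_of_exponent_ge h0 (hpi1 i) (le_of_lt h)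
          _ = p i := Real.rpow_one _
      nlinarith
  -- claim2 : 0 ≤ u * (D - T), D = d ^ u
  set D : ℝ := (d:ℝ) ^ u with hD
  have hDpos : 0 < D := Real.rpow_pos_of_pos hdR u
  have claim2 : 0 ≤ u * (D - T) := by
    have hsum' : ∑ i, (1 / (d:ℝ)) * p i = 1 / (d:ℝ) := by
      rw [← Finset.mul_sum, hsum, mul_one]
    have hTsum : ∑ i, (1 / (d:ℝ)) * p i ^ r = (1 / (d:ℝ)) * T := by
      rw [Finset.mul_sum]
    have hDeq : D = (d:ℝ) * (1 / (d:ℝ)) ^ r := by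
      rw [hD, hu, Real.rpow_sub hdR, Real.rpow_one, one_div, Real.inv_rpow hdR.le,
        div_eq_mul_inv]
    rcases hr with h | h
    · -- 0 < r < 1 : u > 0, need T ≤ D = d^(1-r).
      have hu0 : 0 < u := by simp only [hu, sub_pos]; exact h.2
      have hinv : 1 ≤ 1 / r := by
        rw [le_div_iff₀ h.1]; linarith [h.2]
      have key := Real.rpow_arith_mean_le_arith_mean_rpow Finset.univ
        (fun _ : Fin d => 1 / (d:ℝ)) (fun i => p i ^ r)
        (fun i _ => by positivity) hwsum (fun i _ => Real.rpow_nonneg (hpnn i) r) hinv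
      have hz : ∀ i : Fin d, (p i ^ r) ^ (1/r : ℝ) = p i := by
        intro i
        rw [← Real.rpow_mul (hpnn i), mul_one_div, div_self (ne_of_gt h.1), Real.rpow_one]
      simp only [hz] at key
      rw [hsum'] at key
      rw [hTsum] at key
      -- key : ((1/d) * T) ^ (1/r) ≤ 1/d
      have hA : (0:ℝ) ≤ (1 / (d:ℝ)) * T := by
        apply mul_nonneg (by positivity)
        exact Finset.sum_nonneg fun i _ => Real.rpow_nonneg (hpnn i) r
      have key2 : (((1 / (d:ℝ)) * T) ^ (1/r : ℝ)) ^ r ≤ (1 / (d:ℝ)) ^ r :=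
        Real.rpow_le_rpow (Real.rpow_nonneg hA _) key h.1.le
      rw [← Real.rpow_mul hA, one_div_mul_cancel (ne_of_gt h.1), Real.rpow_one] at key2
      -- key2 : (1/d) * T ≤ (1/d)^r
      have : T ≤ D := by
        rw [hDeq]
        calc T = (d:ℝ) * ((1 / (d:ℝ)) * T) := by field_simp
        _ ≤ (d:ℝ) * (1 / (d:ℝ)) ^ r := by
            exact mul_le_mul_of_nonneg_left key2 hdR.le
      nlinarith
    · -- r > 1 : u < 0, need D ≤ T
      have hu0 : u < 0 := by
        have h' := Set.mem_Ioi.mp h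
        simp only [hu]; linarith
      have key := Real.rpow_arith_mean_le_arith_mean_rpow Finset.univ
        (fun _ : Fin d => 1 / (d:ℝ)) p
        (fun i _ => by positivity) hwsum (fun i _ => hpnn i) (le_of_lt h)
      rw [hsum', hTsum] at key
      -- key : (1/d) ^ r ≤ (1/d) * T
      have : D ≤ T := by
        rw [hDeq]
        calc (d:ℝ) * (1 / (d:ℝ)) ^ r ≤ (d:ℝ) * ((1 / (d:ℝ)) * T) :=
              mul_le_mul_of_nonneg_left key hdR.le
        _ = T := by field_simp
      nlinarith
  have hTpos : 0 < T := by
    rcases hune.lt_or_gt with h | h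
    · nlinarith
    · nlinarith
  have hDt : (d:ℝ) ^ (u * s) = D ^ s := by
    rw [Real.rpow_mul hdR.le]
  constructor
  · exact hy_aux1 T u s hTpos claim1 hune hs
  · have := hy_aux2 T D u s hTpos hDpos claim2 hune hs
    unfold HY
    rw [hDt]
    exact this
end

section
/- Let r ∈ (0,1), s > 0 with r·s < 1 (or r ≥ 1 with r·s ≥ 1). Then the Hu–Ye unified entropy HY_r^s is concave on density matrices: if Q = Σ_k λ_k Q_k with density matrices Q_k and weights λ_k ∈ [0,1], Σ_k λ_k = 1, then HY_r^s(Q) ≥ Σ_k λ_k HY_r^s(Q_k). -/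
open scoped ComplexOrder Matrix
open Finset

namespace HYAux

variable {ι : Type*}

lemma jensen_concave (S : Finset ι) (w z : ι → ℝ) (hw : ∀ i ∈ S, 0 ≤ w i)
    (hw1 : ∑ i ∈ S, w i = 1) (hz : ∀ i ∈ S, 0 ≤ z i) {p : ℝ} (hp0 : 0 ≤ p) (hp1 : p ≤ 1) :
    ∑ i ∈ S, w i * z i ^ p ≤ (∑ i ∈ S, w i * z i) ^ p := by
  simpa [smul_eq_mul] using
    (Real.concaveOn_rpow hp0 hp1).le_map_sum hw hw1 (fun i hi => Set.mem_Ici.2 (hz i hi))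

lemma jensen_convex (S : Finset ι) (w z : ι → ℝ) (hw : ∀ i ∈ S, 0 ≤ w i)
    (hw1 : ∑ i ∈ S, w i = 1) (hz : ∀ i ∈ S, 0 ≤ z i) {p : ℝ} (hp : 1 ≤ p) :
    (∑ i ∈ S, w i * z i) ^ p ≤ ∑ i ∈ S, w i * z i ^ p :=
  Real.rpow_arith_mean_le_arith_mean_rpow S w z hw hw1 hz hp

lemma jensen_concave2 {p : ℝ} (hp0 : 0 ≤ p) (hp1 : p ≤ 1) (t1 t2 x1 x2 : ℝ)
    (ht1 : 0 ≤ t1) (ht2 : 0 ≤ t2) (ht : t1 + t2 = 1) (hx1 : 0 ≤ x1) (hx2 : 0 ≤ x2) :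
    t1 * x1 ^ p + t2 * x2 ^ p ≤ (t1 * x1 + t2 * x2) ^ p := by
  have := jensen_concave (Finset.univ : Finset (Fin 2)) ![t1, t2] ![x1, x2]
    (by intro j _; fin_cases j <;> simpa) (by simpa [Fin.sum_univ_two] using ht)
    (by intro j _; fin_cases j <;> simpa) hp0 hp1
  simpa [Fin.sum_univ_two] using this

noncomputable def pnorm {d : ℕ} (r : ℝ) (a : Fin d → ℝ) : ℝ := (∑ i, a i ^ r) ^ r⁻¹

variable {d : ℕ} {r : ℝ}

lemma sum_rpow_nonneg (a : Fin d → ℝ) (ha : ∀ i, 0 ≤ a i) (r : ℝ) :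
    0 ≤ ∑ i, a i ^ r :=
  Finset.sum_nonneg fun i _ => Real.rpow_nonneg (ha i) _

lemma pnorm_nonneg (a : Fin d → ℝ) (ha : ∀ i, 0 ≤ a i) : 0 ≤ pnorm r a :=
  Real.rpow_nonneg (sum_rpow_nonneg a ha r) _

lemma pnorm_rpow (hr : r ≠ 0) (a : Fin d → ℝ) (ha : ∀ i, 0 ≤ a i) :
    (pnorm r a) ^ r = ∑ i, a i ^ r :=
  Real.rpow_inv_rpow (sum_rpow_nonneg a ha r) hr

lemma pnorm_eq_zero (hr : 0 < r) (a : Fin d → ℝ) (ha : ∀ i, 0 ≤ a i)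
    (h : pnorm r a = 0) : ∀ i, a i = 0 := by
  intro i
  have hs : ∑ j, a j ^ r = 0 := by
    have := pnorm_rpow hr.ne' a ha
    rw [h, Real.zero_rpow hr.ne'] at this
    exact this.symm
  have hir : a i ^ r = 0 :=
    (Finset.sum_eq_zero_iff_of_nonneg (fun j _ => Real.rpow_nonneg (ha j) r)).1 hs i (by simp)
  exact ((Real.rpow_eq_zero_iff_of_nonneg (ha i)).1 hir).1

lemma pnorm_zero (hr : r ≠ 0) : pnorm r (0 : Fin d → ℝ) = 0 := by
  simp [pnorm, Real.zero_rpow hr, Real.zero_rpow (inv_ne_zero hr)]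

/-- Reverse Minkowski, binary version, for `0 < r ≤ 1`. -/
lemma pnorm_add_le (hr0 : 0 < r) (hr1 : r ≤ 1) (a b : Fin d → ℝ)
    (ha : ∀ i, 0 ≤ a i) (hb : ∀ i, 0 ≤ b i) :
    pnorm r a + pnorm r b ≤ pnorm r (a + b) := by
  have hab : ∀ i, 0 ≤ a i + b i := fun i => add_nonneg (ha i) (hb i)
  rcases eq_or_lt_of_le (pnorm_nonneg a ha) with h0 | hApos
  · have ha0 : a = 0 := funext (pnorm_eq_zero hr0 a ha h0.symm)
    rw [ha0, pnorm_zero hr0.ne', zero_add, zero_add]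
  rcases eq_or_lt_of_le (pnorm_nonneg b hb) with h0 | hBpos
  · have hb0 : b = 0 := funext (pnorm_eq_zero hr0 b hb h0.symm)
    rw [hb0, pnorm_zero hr0.ne', add_zero, add_zero]
  set A := pnorm r a with hA
  set B := pnorm r b with hB
  have hABpos : 0 < A + B := by linarith
  have hAr : ∑ i, (a i / A) ^ r = 1 := by
    have h1 : ∀ i : Fin d, (a i / A) ^ r = a i ^ r / A ^ r := fun i =>
      Real.div_rpow (ha i) hApos.le r
    rw [Finset.sum_congr rfl fun i _ => h1 i, ← Finset.sum_div,
      ← pnorm_rpow hr0.ne' a ha, ← hA, div_self]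
    exact (Real.rpow_pos_of_pos hApos r).ne'
  have hBr : ∑ i, (b i / B) ^ r = 1 := by
    have h1 : ∀ i : Fin d, (b i / B) ^ r = b i ^ r / B ^ r := fun i =>
      Real.div_rpow (hb i) hBpos.le r
    rw [Finset.sum_congr rfl fun i _ => h1 i, ← Finset.sum_div,
      ← pnorm_rpow hr0.ne' b hb, ← hB, div_self]
    exact (Real.rpow_pos_of_pos hBpos r).ne'
  have key : (A + B) ^ r ≤ ∑ i, (a i + b i) ^ r := by
    have pointwise : ∀ i : Fin d,
        (A + B) ^ r * ((A / (A + B)) * (a i / A) ^ r + (B / (A + B)) * (b i / B) ^ r)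
        ≤ (a i + b i) ^ r := by
      intro i
      have hsum : a i + b i
          = (A + B) * ((A / (A + B)) * (a i / A) + (B / (A + B)) * (b i / B)) := by
        field_simp
      have hinner : 0 ≤ (A / (A + B)) * (a i / A) + (B / (A + B)) * (b i / B) := by
        have := div_nonneg (ha i) hApos.le
        have := div_nonneg (hb i) hBpos.le
        have := div_nonneg hApos.le hABpos.le
        have := div_nonneg hBpos.le hABpos.le
        positivity
      rw [hsum, Real.mul_rpow hABpos.le hinner]
      apply mul_le_mul_of_nonneg_left _ (Real.rpow_nonneg hABpos.le r)
      exact jensen_concave2 hr0.le hr1 _ _ _ _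
        (div_nonneg hApos.le hABpos.le) (div_nonneg hBpos.le hABpos.le)
        (by field_simp) (div_nonneg (ha i) hApos.le) (div_nonneg (hb i) hBpos.le)
    calc (A + B) ^ r = (A + B) ^ r *
          ((A / (A + B)) * (∑ i, (a i / A) ^ r) + (B / (A + B)) * (∑ i, (b i / B) ^ r)) := by
          rw [hAr, hBr]; field_simp
      _ = ∑ i, (A + B) ^ r * ((A / (A + B)) * (a i / A) ^ r + (B / (A + B)) * (b i / B) ^ r) := by
          rw [← Finset.mul_sum]
          congr 1
          rw [Finset.mul_sum, Finset.mul_sum, ← Finset.sum_add_distrib]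
      _ ≤ ∑ i, (a i + b i) ^ r := Finset.sum_le_sum fun i _ => pointwise i
  calc A + B = ((A + B) ^ r) ^ r⁻¹ := (Real.rpow_rpow_inv hABpos.le hr0.ne').symm
    _ ≤ (∑ i, (a i + b i) ^ r) ^ r⁻¹ :=
        Real.rpow_le_rpow (Real.rpow_nonneg hABpos.le r) key (by positivity)
    _ = pnorm r (a + b) := by simp [pnorm]

/-- Minkowski, binary version, for `1 ≤ r`. -/
lemma pnorm_le_add (hr : 1 ≤ r) (a b : Fin d → ℝ)
    (ha : ∀ i, 0 ≤ a i) (hb : ∀ i, 0 ≤ b i) :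
    pnorm r (a + b) ≤ pnorm r a + pnorm r b := by
  have := Real.Lp_add_le (Finset.univ : Finset (Fin d)) a b hr
  simp only [abs_of_nonneg, ha, hb, fun i => add_nonneg (ha i) (hb i), one_div] at this
  simpa [pnorm] using this

lemma sum_pnorm_le (hr0 : 0 < r) (hr1 : r ≤ 1) {κ : Type*} (S : Finset κ)
    (e : κ → Fin d → ℝ) (he : ∀ k i, 0 ≤ e k i) :
    ∑ k ∈ S, pnorm r (e k) ≤ pnorm r (fun i => ∑ k ∈ S, e k i) := by
  classical
  induction S using Finset.cons_induction with
  | empty => simp only [Finset.sum_empty]; exact le_of_eq (pnorm_zero hr0.ne').symm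
  | cons a S haS ih =>
    rw [Finset.sum_cons]
    have heq : (fun i => ∑ k ∈ Finset.cons a S haS, e k i)
        = e a + fun i => ∑ k ∈ S, e k i := by
      funext i; rw [Finset.cons_eq_insert, Finset.sum_insert haS]; rfl
    rw [heq]
    calc pnorm r (e a) + ∑ k ∈ S, pnorm r (e k)
        ≤ pnorm r (e a) + pnorm r (fun i => ∑ k ∈ S, e k i) := by
          exact add_le_add (le_refl _) ih
      _ ≤ pnorm r (e a + fun i => ∑ k ∈ S, e k i) :=
          pnorm_add_le hr0 hr1 _ _ (he a) (fun i => Finset.sum_nonneg fun k _ => he k i)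

lemma pnorm_le_sum (hr : 1 ≤ r) {κ : Type*} (S : Finset κ)
    (e : κ → Fin d → ℝ) (he : ∀ k i, 0 ≤ e k i) :
    pnorm r (fun i => ∑ k ∈ S, e k i) ≤ ∑ k ∈ S, pnorm r (e k) := by
  classical
  induction S using Finset.cons_induction with
  | empty => simp only [Finset.sum_empty]; exact le_of_eq (pnorm_zero (by linarith))
  | cons a S haS ih =>
    rw [Finset.sum_cons]
    have heq : (fun i => ∑ k ∈ Finset.cons a S haS, e k i)
        = e a + fun i => ∑ k ∈ S, e k i := by
      funext i; rw [Finset.cons_eq_insert, Finset.sum_insert haS]; rfl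
    rw [heq]
    calc pnorm r (e a + fun i => ∑ k ∈ S, e k i)
        ≤ pnorm r (e a) + pnorm r (fun i => ∑ k ∈ S, e k i) :=
          pnorm_le_add hr _ _ (he a) (fun i => Finset.sum_nonneg fun k _ => he k i)
      _ ≤ pnorm r (e a) + ∑ k ∈ S, pnorm r (e k) := add_le_add (le_refl _) ih

lemma peierls_concave (hr0 : 0 < r) (hr1 : r ≤ 1) (μ : Fin d → ℝ) (hμ : ∀ j, 0 ≤ μ j)
    (p : Fin d → Fin d → ℝ) (hp : ∀ i j, 0 ≤ p i j)
    (hrow : ∀ i, ∑ j, p i j = 1) (hcol : ∀ j, ∑ i, p i j = 1) :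
    ∑ j, μ j ^ r ≤ ∑ i, (∑ j, p i j * μ j) ^ r := by
  calc ∑ j, μ j ^ r = ∑ j, (∑ i, p i j) * μ j ^ r := by
        refine Finset.sum_congr rfl fun j _ => ?_; rw [hcol j, one_mul]
    _ = ∑ j, ∑ i, p i j * μ j ^ r := Finset.sum_congr rfl fun j _ => Finset.sum_mul _ _ _
    _ = ∑ i, ∑ j, p i j * μ j ^ r := Finset.sum_comm
    _ ≤ ∑ i, (∑ j, p i j * μ j) ^ r := Finset.sum_le_sum fun i _ =>
        jensen_concave Finset.univ (p i) μ (fun j _ => hp i j) (hrow i)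
          (fun j _ => hμ j) hr0.le hr1

lemma peierls_convex (hr : 1 ≤ r) (μ : Fin d → ℝ) (hμ : ∀ j, 0 ≤ μ j)
    (p : Fin d → Fin d → ℝ) (hp : ∀ i j, 0 ≤ p i j)
    (hrow : ∀ i, ∑ j, p i j = 1) (hcol : ∀ j, ∑ i, p i j = 1) :
    ∑ i, (∑ j, p i j * μ j) ^ r ≤ ∑ j, μ j ^ r := by
  calc ∑ i, (∑ j, p i j * μ j) ^ r
      ≤ ∑ i, ∑ j, p i j * μ j ^ r := Finset.sum_le_sum fun i _ =>
        jensen_convex Finset.univ (p i) μ (fun j _ => hp i j) (hrow i)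
          (fun j _ => hμ j) hr
    _ = ∑ j, ∑ i, p i j * μ j ^ r := Finset.sum_comm
    _ = ∑ j, (∑ i, p i j) * μ j ^ r := Finset.sum_congr rfl fun j _ => (Finset.sum_mul _ _ _).symm
    _ = ∑ j, μ j ^ r := by
        refine Finset.sum_congr rfl fun j _ => ?_; rw [hcol j, one_mul]

end HYAux

theorem HY_concave {d m : ℕ} (r s : ℝ)
    (hrs : (r ∈ Set.Ioo (0:ℝ) 1 ∧ 0 < s ∧ r * s < 1) ∨ (1 ≤ r ∧ 1 ≤ r * s))
    (Qk : Fin m → Matrix (Fin d) (Fin d) ℂ)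
    (hQk : ∀ k, (Qk k).PosSemidef) (hTrk : ∀ k, (Qk k).trace = 1)
    (w : Fin m → ℝ) (hw : ∀ k, w k ∈ Set.Icc (0:ℝ) 1) (hw1 : ∑ k, w k = 1)
    (hQ : (∑ k, (w k : ℂ) • Qk k).PosSemidef) :
    HY hQ.1 r s ≥ ∑ k, w k * HY (hQk k).1 r s := by
  classical
  open HYAux in
  -- basic positivity of the exponents
  have hr0 : 0 < r := by
    rcases hrs with ⟨⟨h, _⟩, _⟩ | ⟨h, _⟩ <;> linarith
  have hs0 : 0 < s := by
    rcases hrs with ⟨_, h, _⟩ | ⟨h1, h2⟩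
    · exact h
    · nlinarith
  have hrne : r ≠ 0 := hr0.ne'
  -- the change-of-basis matrices
  set U : Matrix (Fin d) (Fin d) ℂ := ↑(Matrix.IsHermitian.eigenvectorUnitary hQ.1) with hU
  set V : Fin m → Matrix (Fin d) (Fin d) ℂ :=
    fun k => ↑(Matrix.IsHermitian.eigenvectorUnitary (hQk k).1) with hV
  set W : Fin m → Matrix (Fin d) (Fin d) ℂ := fun k => star U * V k with hW
  simp only [HY, ge_iff_le]
  set lam : Fin d → ℝ := hQ.1.eigenvalues with hlamdef
  set mu : Fin m → Fin d → ℝ := fun k => (hQk k).1.eigenvalues with hmudef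
  set p : Fin m → Fin d → Fin d → ℝ := fun k i j => Complex.normSq (W k i j) with hp
  set c : Fin m → Fin d → ℝ := fun k i => ∑ j, p k i j * mu k j with hc
  have hw0 : ∀ k, 0 ≤ w k := fun k => (hw k).1
  have hlam0 : ∀ i, 0 ≤ lam i := fun i => hQ.eigenvalues_nonneg i
  have hmu0 : ∀ k j, 0 ≤ mu k j := fun k j => (hQk k).eigenvalues_nonneg j
  have hp0 : ∀ k i j, 0 ≤ p k i j := fun k i j => Complex.normSq_nonneg _
  have hc0 : ∀ k i, 0 ≤ c k i := fun k i =>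
    Finset.sum_nonneg fun j _ => mul_nonneg (hp0 k i j) (hmu0 k j)
  -- unitarity of W and double stochasticity of p
  have hWmem : ∀ k, W k ∈ Matrix.unitaryGroup (Fin d) ℂ := fun k =>
    mul_mem (Unitary.star_mem (Matrix.IsHermitian.eigenvectorUnitary hQ.1).2)
      (Matrix.IsHermitian.eigenvectorUnitary (hQk k).1).2
  have hrow : ∀ k i, ∑ j, p k i j = 1 := by
    intro k i
    have h1 : (W k * star (W k)) i i = 1 := by
      rw [(Matrix.mem_unitaryGroup_iff).mp (hWmem k)]; simp [Matrix.one_apply]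
    rw [Matrix.mul_apply] at h1
    have h2 : ∀ j : Fin d, W k i j * star (W k) j i = ((p k i j : ℝ) : ℂ) := fun j => by
      rw [Matrix.star_apply, Complex.star_def, Complex.mul_conj]
    rw [Finset.sum_congr rfl fun j _ => h2 j] at h1
    exact_mod_cast h1
  have hcol : ∀ k j, ∑ i, p k i j = 1 := by
    intro k j
    have h1 : (star (W k) * W k) j j = 1 := by
      rw [(Matrix.mem_unitaryGroup_iff').mp (hWmem k)]; simp [Matrix.one_apply]
    rw [Matrix.mul_apply] at h1
    have h2 : ∀ i : Fin d, (star (W k)) j i * W k i j = ((p k i j : ℝ) : ℂ) := fun i => by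
      rw [Matrix.star_apply, Complex.star_def, mul_comm, Complex.mul_conj]
    rw [Finset.sum_congr rfl fun i _ => h2 i] at h1
    exact_mod_cast h1
  -- conjugating each Qk by U
  have hdiagk : ∀ k, star U * Qk k * U
      = W k * Matrix.diagonal ((RCLike.ofReal ∘ mu k : Fin d → ℂ)) * star (W k) := by
    intro k
    have hstarW : star (W k) = star (V k) * U := by
      rw [hW]; simp only [StarMul.star_mul, star_star]
    rw [hstarW, hW]
    conv_lhs => rw [(hQk k).1.spectral_theorem, Unitary.conjStarAlgAut_apply]
    simp only [Matrix.mul_assoc, hV, Unitary.coe_star]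
    rfl
  have hck : ∀ k i, (star U * Qk k * U) i i = ((c k i : ℝ) : ℂ) := by
    intro k i
    rw [hdiagk k, Matrix.mul_apply]
    have h2 : ∀ j : Fin d,
        (W k * Matrix.diagonal ((RCLike.ofReal ∘ mu k : Fin d → ℂ))) i j * star (W k) j i
        = ((p k i j * mu k j : ℝ) : ℂ) := by
      intro j
      rw [Matrix.mul_diagonal, Matrix.star_apply, Complex.star_def]
      have : ((RCLike.ofReal ∘ mu k : Fin d → ℂ)) j = Complex.ofReal (mu k j) := rfl
      rw [this, hp]
      push_cast
      rw [mul_comm (W k i j), mul_assoc, Complex.mul_conj]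
      ring
    rw [Finset.sum_congr rfl fun j _ => h2 j, hc]
    push_cast
    rfl
  have hQdiag : star U * (∑ k, (w k : ℂ) • Qk k) * U
      = Matrix.diagonal ((RCLike.ofReal ∘ lam : Fin d → ℂ)) :=
    by
      have h := hQ.1.conjStarAlgAut_star_eigenvectorUnitary
      rw [Unitary.conjStarAlgAut_apply, Unitary.coe_star, star_star] at h
      exact h
  have hsum : star U * (∑ k, (w k : ℂ) • Qk k) * U = ∑ k, (w k : ℂ) • (star U * Qk k * U) := by
    rw [Matrix.mul_sum, Matrix.sum_mul]
    refine Finset.sum_congr rfl fun k _ => ?_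
    rw [Matrix.mul_smul, Matrix.smul_mul]
  have hlam : ∀ i, lam i = ∑ k, w k * c k i := by
    intro i
    have h1 : ((lam i : ℝ) : ℂ) = ∑ k, ((w k * c k i : ℝ) : ℂ) := by
      calc ((lam i : ℝ) : ℂ) = Matrix.diagonal ((RCLike.ofReal ∘ lam : Fin d → ℂ)) i i := by
            simp [Matrix.diagonal_apply_eq]
        _ = (∑ k, (w k : ℂ) • (star U * Qk k * U)) i i := by rw [← hsum, hQdiag]
        _ = ∑ k, (w k : ℂ) * (star U * Qk k * U) i i := by
            rw [Matrix.sum_apply]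
            exact Finset.sum_congr rfl fun k _ => by rw [Matrix.smul_apply, smul_eq_mul]
        _ = ∑ k, ((w k * c k i : ℝ) : ℂ) := by
            refine Finset.sum_congr rfl fun k _ => ?_
            rw [hck k i]; push_cast; ring
    exact_mod_cast h1
  -- now the purely real-analytic part
  set X : ℝ := ∑ i, lam i ^ r with hX
  set xx : Fin m → ℝ := fun k => ∑ j, mu k j ^ r with hxx
  set t : Fin m → ℝ := fun k => ∑ i, c k i ^ r with ht
  set e : Fin m → Fin d → ℝ := fun k i => w k * c k i with he
  have he0 : ∀ k i, 0 ≤ e k i := fun k i => mul_nonneg (hw0 k) (hc0 k i)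
  have hXnn : 0 ≤ X := sum_rpow_nonneg lam hlam0 r
  have hxnn : ∀ k, 0 ≤ xx k := fun k => sum_rpow_nonneg (mu k) (hmu0 k) r
  have htnn : ∀ k, 0 ≤ t k := fun k => sum_rpow_nonneg (c k) (hc0 k) r
  have hlame : (fun i => ∑ k, e k i) = lam := funext fun i => (hlam i).symm
  have hXs : (pnorm r lam) ^ (r * s) = X ^ s := by
    rw [Real.rpow_mul (pnorm_nonneg lam hlam0), pnorm_rpow hrne lam hlam0]
  have hek : ∀ k, pnorm r (e k) = w k * (t k) ^ r⁻¹ := by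
    intro k
    rw [pnorm]
    have h1 : ∀ i : Fin d, (w k * c k i) ^ r = w k ^ r * c k i ^ r := fun i =>
      Real.mul_rpow (hw0 k) (hc0 k i)
    rw [Finset.sum_congr rfl fun i _ => h1 i, ← Finset.mul_sum,
      Real.mul_rpow (Real.rpow_nonneg (hw0 k) r) (sum_rpow_nonneg (c k) (hc0 k) r),
      Real.rpow_rpow_inv (hw0 k) hrne]
  have hts : ∀ k, (t k ^ r⁻¹) ^ (r * s) = t k ^ s := by
    intro k
    rw [← Real.rpow_mul (htnn k)]
    congr 1
    field_simp
  have hTnn : 0 ≤ ∑ k, w k * t k ^ r⁻¹ :=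
    Finset.sum_nonneg fun k _ => mul_nonneg (hw0 k) (Real.rpow_nonneg (htnn k) _)
  set C : ℝ := 1 / ((1 - r) * s) with hC
  have hRHSeq : ∀ (Y : Fin m → ℝ), ∑ k, w k * (C * (Y k - 1)) = C * ((∑ k, w k * Y k) - 1) := by
    intro Y
    calc ∑ k, w k * (C * (Y k - 1)) = ∑ k, (C * (w k * Y k) - C * w k) :=
          Finset.sum_congr rfl fun k _ => by ring
      _ = C * (∑ k, w k * Y k) - C * ∑ k, w k := by
          rw [Finset.sum_sub_distrib, ← Finset.mul_sum, ← Finset.mul_sum]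
      _ = C * ((∑ k, w k * Y k) - 1) := by rw [hw1]; ring
  rw [show (∑ k, w k * (1 / ((1 - r) * s) * ((∑ j, mu k j ^ r) ^ s - 1)))
      = ∑ k, w k * (C * (xx k ^ s - 1)) from rfl, hRHSeq (fun k => xx k ^ s)]
  rcases hrs with ⟨⟨_, hr1⟩, _, hrs1⟩ | ⟨hr1, hrs1⟩
  · -- concave case : 0 < r < 1, 0 < s, r * s < 1
    have hPe : ∀ k, xx k ≤ t k := fun k =>
      peierls_concave hr0 hr1.le (mu k) (hmu0 k) (p k) (hp0 k) (hrow k) (hcol k)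
    have hMink : ∑ k, w k * t k ^ r⁻¹ ≤ pnorm r lam := by
      have h := sum_pnorm_le hr0 hr1.le Finset.univ e he0
      rw [hlame] at h
      calc ∑ k, w k * t k ^ r⁻¹ = ∑ k, pnorm r (e k) :=
            Finset.sum_congr rfl fun k _ => (hek k).symm
        _ ≤ pnorm r lam := h
    have key : ∑ k, w k * xx k ^ s ≤ X ^ s := by
      calc ∑ k, w k * xx k ^ s ≤ ∑ k, w k * t k ^ s :=
            Finset.sum_le_sum fun k _ => mul_le_mul_of_nonneg_left
              (Real.rpow_le_rpow (hxnn k) (hPe k) hs0.le) (hw0 k)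
        _ = ∑ k, w k * (t k ^ r⁻¹) ^ (r * s) :=
            Finset.sum_congr rfl fun k _ => by rw [hts k]
        _ ≤ (∑ k, w k * t k ^ r⁻¹) ^ (r * s) :=
            jensen_concave Finset.univ w (fun k => t k ^ r⁻¹) (fun k _ => hw0 k) hw1
              (fun k _ => Real.rpow_nonneg (htnn k) _)
              (mul_nonneg hr0.le hs0.le) hrs1.le
        _ ≤ (pnorm r lam) ^ (r * s) :=
            Real.rpow_le_rpow hTnn hMink (mul_nonneg hr0.le hs0.le)
        _ = X ^ s := hXs
    have hCpos : 0 ≤ C := by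
      rw [hC]
      have : 0 < (1 - r) * s := mul_pos (by linarith) hs0
      positivity
    have := mul_le_mul_of_nonneg_left (sub_le_sub_right key 1) hCpos
    linarith
  · -- convex case : 1 ≤ r, 1 ≤ r * s
    have hPe : ∀ k, t k ≤ xx k := fun k =>
      peierls_convex hr1 (mu k) (hmu0 k) (p k) (hp0 k) (hrow k) (hcol k)
    have hMink : pnorm r lam ≤ ∑ k, w k * t k ^ r⁻¹ := by
      have h := pnorm_le_sum hr1 Finset.univ e he0
      rw [hlame] at h
      calc pnorm r lam ≤ ∑ k, pnorm r (e k) := h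
        _ = ∑ k, w k * t k ^ r⁻¹ := Finset.sum_congr rfl fun k _ => hek k
    have key : X ^ s ≤ ∑ k, w k * xx k ^ s := by
      calc X ^ s = (pnorm r lam) ^ (r * s) := hXs.symm
        _ ≤ (∑ k, w k * t k ^ r⁻¹) ^ (r * s) :=
            Real.rpow_le_rpow (pnorm_nonneg lam hlam0) hMink (mul_nonneg hr0.le hs0.le)
        _ ≤ ∑ k, w k * (t k ^ r⁻¹) ^ (r * s) :=
            jensen_convex Finset.univ w (fun k => t k ^ r⁻¹) (fun k _ => hw0 k) hw1
              (fun k _ => Real.rpow_nonneg (htnn k) _) hrs1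
        _ = ∑ k, w k * t k ^ s := Finset.sum_congr rfl fun k _ => by rw [hts k]
        _ ≤ ∑ k, w k * xx k ^ s :=
            Finset.sum_le_sum fun k _ => mul_le_mul_of_nonneg_left
              (Real.rpow_le_rpow (htnn k) (hPe k) hs0.le) (hw0 k)
    have hCneg : C ≤ 0 := by
      rw [hC]
      apply one_div_nonpos.mpr
      apply mul_nonpos_of_nonpos_of_nonneg (by linarith) hs0.le
    have := mul_le_mul_of_nonpos_left (sub_le_sub_right key 1) hCneg
    linarith
end

section
/- Let Q be a density matrix with rank(Q) = d'. Then for admissible r and s, HY_r^s(Q) ≤ (1/((1−r)s))·(d'^{(1−r)s} − 1), with equality iff the nonzero spectrum of Q is (1/d', …, 1/d'). -/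
open scoped ComplexOrder Matrix

private lemma mono_aux {T U c s : ℝ} (hT : 0 < T) (hU : 0 < U) (hc : c ≠ 0) (hs : s ≠ 0)
    (h : c * T ≤ c * U) :
    (1 / (c * s)) * (T ^ s - 1) ≤ (1 / (c * s)) * (U ^ s - 1) ∧
      ((1 / (c * s)) * (T ^ s - 1) = (1 / (c * s)) * (U ^ s - 1) ↔ T = U) := by
  have hcs : c * s ≠ 0 := mul_ne_zero hc hs
  constructor
  · rcases hc.lt_or_gt with hcneg | hcpos
    · have hUT : U ≤ T := by nlinarith
      rcases hs.lt_or_gt with hsneg | hspos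
      · have hpow : T ^ s ≤ U ^ s := Real.rpow_le_rpow_of_nonpos hU hUT hsneg.le
        have hpos : 0 < 1 / (c * s) := one_div_pos.mpr (mul_pos_of_neg_of_neg hcneg hsneg)
        nlinarith
      · have hpow : U ^ s ≤ T ^ s := Real.rpow_le_rpow hU.le hUT hspos.le
        have hneg : 1 / (c * s) < 0 := one_div_neg.mpr (mul_neg_of_neg_of_pos hcneg hspos)
        nlinarith
    · have hTU : T ≤ U := le_of_mul_le_mul_left h hcpos
      rcases hs.lt_or_gt with hsneg | hspos
      · have hpow : U ^ s ≤ T ^ s := Real.rpow_le_rpow_of_nonpos hT hTU hsneg.le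
        have hneg : 1 / (c * s) < 0 := one_div_neg.mpr (mul_neg_of_pos_of_neg hcpos hsneg)
        nlinarith
      · have hpow : T ^ s ≤ U ^ s := Real.rpow_le_rpow hT.le hTU hspos.le
        have hpos : 0 < 1 / (c * s) := one_div_pos.mpr (mul_pos hcpos hspos)
        nlinarith
  · constructor
    · intro heq
      have h2 : T ^ s = U ^ s := by
        have := mul_left_cancel₀ (one_div_ne_zero hcs) heq
        linarith
      have h3 := congrArg Real.log h2
      rw [Real.log_rpow hT, Real.log_rpow hU] at h3
      have h4 : Real.log T = Real.log U := mul_left_cancel₀ hs h3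
      rw [← Real.exp_log hT, ← Real.exp_log hU, h4]
    · rintro rfl; rfl

private lemma key {d : ℕ} (lam : Fin d → ℝ) (hnn : ∀ i, 0 ≤ lam i) (hsum : ∑ i, lam i = 1)
    {r : ℝ} (hr : r ∈ Set.Ioo (0:ℝ) 1 ∪ Set.Ioi 1) :
    0 < (Finset.univ.filter fun i => lam i ≠ 0).card ∧
    0 < ∑ i, lam i ^ r ∧
    ((1 - r) * (∑ i, lam i ^ r) ≤
        (1 - r) * ((Finset.univ.filter fun i => lam i ≠ 0).card : ℝ) ^ (1 - r)) ∧
      ((∑ i, lam i ^ r) = ((Finset.univ.filter fun i => lam i ≠ 0).card : ℝ) ^ (1 - r) ↔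
        ∀ i, lam i = 0 ∨ lam i = 1 / ((Finset.univ.filter fun i => lam i ≠ 0).card : ℝ)) := by
  classical
  have hr0 : 0 < r := by
    rcases hr with h | h
    · exact h.1
    · linarith [Set.mem_Ioi.mp h]
  set S := Finset.univ.filter fun i => lam i ≠ 0 with hSdef
  set n := S.card with hndef
  have hSmem : ∀ i, i ∈ S ↔ lam i ≠ 0 := by intro i; simp [hSdef]
  have hSne : S.Nonempty := by
    rcases Finset.eq_empty_or_nonempty S with h | h
    · exfalso
      have hz : ∀ i, lam i = 0 := fun i => by
        by_contra hne
        exact (Finset.eq_empty_iff_forall_notMem.mp h i) ((hSmem i).mpr hne)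
      simp [hz] at hsum
    · exact h
  have hn0 : 0 < n := Finset.card_pos.mpr hSne
  have hnR : (0:ℝ) < (n:ℝ) := by exact_mod_cast hn0
  have hnne : (n:ℝ) ≠ 0 := hnR.ne'
  have hsumS : ∑ i ∈ S, lam i = 1 := by
    rw [← hsum]
    refine Finset.sum_subset (Finset.subset_univ S) (fun i _ hi => ?_)
    have : ¬ lam i ≠ 0 := fun hne => hi ((hSmem i).mpr hne)
    exact not_not.mp this
  have hTS : ∑ i, lam i ^ r = ∑ i ∈ S, lam i ^ r := by
    symm
    refine Finset.sum_subset (Finset.subset_univ S) (fun i _ hi => ?_)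
    have hz : lam i = 0 := not_not.mp (fun hne => hi ((hSmem i).mpr hne))
    rw [hz, Real.zero_rpow hr0.ne']
  have hTpos : 0 < ∑ i, lam i ^ r := by
    rw [hTS]
    refine Finset.sum_pos (fun i hi => ?_) hSne
    exact Real.rpow_pos_of_pos (lt_of_le_of_ne (hnn i) (Ne.symm ((hSmem i).mp hi))) r
  -- Jensen setup
  have h₀le : ∀ i ∈ S, (0:ℝ) ≤ (n:ℝ)⁻¹ := fun i _ => by positivity
  have h₀lt : ∀ i ∈ S, (0:ℝ) < (n:ℝ)⁻¹ := fun i _ => by positivity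
  have h₁ : ∑ _i ∈ S, (n:ℝ)⁻¹ = 1 := by
    rw [Finset.sum_const, nsmul_eq_mul, ← hndef, mul_inv_cancel₀ hnne]
  have hmem : ∀ i ∈ S, lam i ∈ Set.Ici (0:ℝ) := fun i _ => hnn i
  have hcenter : ∑ i ∈ S, (n:ℝ)⁻¹ • lam i = (n:ℝ)⁻¹ := by
    simp only [smul_eq_mul, ← Finset.mul_sum, hsumS, mul_one]
  have hU' : (n:ℝ) * ((n:ℝ)⁻¹) ^ r = (n:ℝ) ^ (1 - r) := by
    rw [Real.inv_rpow hnR.le, Real.rpow_sub hnR, Real.rpow_one, div_eq_mul_inv]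
  -- transformed equality iff
  have hTiff : (∑ i, lam i ^ r) = (n:ℝ) ^ (1 - r) ↔
      ((n:ℝ)⁻¹) ^ r = (n:ℝ)⁻¹ * (∑ i ∈ S, lam i ^ r) := by
    rw [hTS, ← hU']
    constructor
    · intro h
      rw [h, ← mul_assoc, inv_mul_cancel₀ hnne, one_mul]
    · intro h
      rw [h, ← mul_assoc, mul_inv_cancel₀ hnne, one_mul]
  have hiff2 : (∀ j ∈ S, lam j = (n:ℝ)⁻¹) ↔ (∀ i, lam i = 0 ∨ lam i = 1 / (n:ℝ)) := by
    constructor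
    · intro h i
      by_cases hi : lam i = 0
      · exact Or.inl hi
      · exact Or.inr (by rw [one_div]; exact h i ((hSmem i).mpr hi))
    · intro h j hj
      rcases h j with h0 | h1
      · exact absurd h0 ((hSmem j).mp hj)
      · rw [h1, one_div]
  refine ⟨hn0, hTpos, ?_, ?_⟩
  · -- inequality
    rcases hr with hlt | hgt
    · have hconc := (Real.strictConcaveOn_rpow hr0 hlt.2).concaveOn
      have hjen := hconc.le_map_sum h₀le h₁ hmem
      rw [hcenter] at hjen
      simp only [smul_eq_mul, ← Finset.mul_sum] at hjen
      -- hjen : (n:ℝ)⁻¹ * ∑ i ∈ S, lam i ^ r ≤ ((n:ℝ)⁻¹) ^ r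
      have h1r : 0 < 1 - r := by linarith [hlt.2]
      have htle : ∑ i, lam i ^ r ≤ (n:ℝ) ^ (1 - r) := by
        rw [hTS, ← hU']
        have h2 := mul_le_mul_of_nonneg_left hjen hnR.le
        rw [← mul_assoc, mul_inv_cancel₀ hnne, one_mul] at h2
        exact h2
      nlinarith [htle, h1r]
    · have hconv := (strictConvexOn_rpow (Set.mem_Ioi.mp hgt)).convexOn
      have hjen := hconv.map_sum_le h₀le h₁ hmem
      rw [hcenter] at hjen
      simp only [smul_eq_mul, ← Finset.mul_sum] at hjen
      -- hjen : ((n:ℝ)⁻¹) ^ r ≤ (n:ℝ)⁻¹ * ∑ i ∈ S, lam i ^ r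
      have h1r : 1 - r < 0 := by linarith [Set.mem_Ioi.mp hgt]
      have htge : (n:ℝ) ^ (1 - r) ≤ ∑ i, lam i ^ r := by
        rw [hTS, ← hU']
        have h2 := mul_le_mul_of_nonneg_left hjen hnR.le
        rw [← mul_assoc, mul_inv_cancel₀ hnne, one_mul] at h2
        exact h2
      nlinarith [htge, h1r]
  · -- equality iff
    rw [hTiff, ← hiff2]
    have hcast : ∀ (heq : ((∑ i ∈ S, (n:ℝ)⁻¹ • lam i) ^ r = ∑ i ∈ S, (n:ℝ)⁻¹ • (lam i ^ r)) ↔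
        ∀ j ∈ S, lam j = ∑ i ∈ S, (n:ℝ)⁻¹ • lam i), True := fun _ => trivial
    clear hcast
    have hmain : ((∑ i ∈ S, (n:ℝ)⁻¹ • lam i) ^ r = ∑ i ∈ S, (n:ℝ)⁻¹ • (lam i ^ r)) ↔
        ∀ j ∈ S, lam j = ∑ i ∈ S, (n:ℝ)⁻¹ • lam i := by
      rcases hr with hlt | hgt
      · exact (Real.strictConcaveOn_rpow hr0 hlt.2).map_sum_eq_iff h₀lt h₁ hmem
      · exact (strictConvexOn_rpow (Set.mem_Ioi.mp hgt)).map_sum_eq_iff h₀lt h₁ hmem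
    rw [hcenter] at hmain
    simp only [smul_eq_mul, ← Finset.mul_sum] at hmain
    exact hmain

theorem HY_rank_bound {d : ℕ} {Q : Matrix (Fin d) (Fin d) ℂ}
    (hQ : Q.PosSemidef) (hTr : Q.trace = 1)
    (r s : ℝ) (hr : r ∈ Set.Ioo (0:ℝ) 1 ∪ Set.Ioi 1) (hs : s ≠ 0) :
    HY hQ.1 r s ≤ (1 / ((1 - r) * s)) * ((Q.rank : ℝ) ^ ((1 - r) * s) - 1) ∧
    (HY hQ.1 r s = (1 / ((1 - r) * s)) * ((Q.rank : ℝ) ^ ((1 - r) * s) - 1) ↔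
      ∀ i, hQ.1.eigenvalues i = 0 ∨ hQ.1.eigenvalues i = 1 / (Q.rank : ℝ)) := by
  classical
  set lam := hQ.1.eigenvalues with hlam
  have hnn : ∀ i, 0 ≤ lam i := fun i => hQ.eigenvalues_nonneg i
  have hc : (1:ℝ) - r ≠ 0 := by
    rcases hr with h | h
    · exact sub_ne_zero_of_ne h.2.ne'
    · exact sub_ne_zero_of_ne (Set.mem_Ioi.mp h).ne
  have htr : ∑ i, lam i = 1 := by
    have h1 : Q.trace = ∑ i, (lam i : ℂ) := by
      rw [hQ.1.trace_eq_sum_eigenvalues]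
      simp [hlam]
    rw [h1] at hTr
    have h2 : ((∑ i, lam i : ℝ) : ℂ) = ((1:ℝ) : ℂ) := by push_cast; simpa using hTr
    exact_mod_cast h2
  obtain ⟨hn0, hTpos, hkey1, hkey2⟩ := key lam hnn htr hr
  set n := (Finset.univ.filter fun i => lam i ≠ 0).card with hndef
  have hnR : (0:ℝ) < (n:ℝ) := by exact_mod_cast hn0
  have hrank : (Q.rank : ℝ) = (n:ℝ) := by
    rw [hQ.1.rank_eq_card_non_zero_eigs]
    norm_cast
    rw [hndef]
    exact Fintype.card_subtype _
  have hU : 0 < ((n:ℝ)) ^ (1 - r) := Real.rpow_pos_of_pos hnR _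
  obtain ⟨hm1, hm2⟩ := mono_aux hTpos hU hc hs hkey1
  have hpowmul : (Q.rank : ℝ) ^ ((1 - r) * s) = (((n:ℝ)) ^ (1 - r)) ^ s := by
    rw [hrank, Real.rpow_mul (Nat.cast_nonneg n)]
  constructor
  · simp only [HY]
    rw [hpowmul]
    exact hm1
  · simp only [HY]
    rw [hpowmul, hrank]
    exact hm2.trans hkey2
end
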